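/- Let k and m be integers with 1 ≤ m ≤ k, let B ⊆ S, let S' ⊆ S, and suppose X ⊆ S' with |X| ≤ k maximizes Δ(·|B) among all subsets of S' of cardinality at most k. Then for every Z ⊆ S' with |Z| ≤ m, it holds that Δ(Z | B ∪ X) ≤ (m/k)·Δ(X|B). -/

import Mathlib

open Finset

variable {α : Type*}

/-- `f` is monotone on finsets. -/
def IsMonotoneFn (f : Finset α → ℝ) : Prop := ∀ A B : Finset α, A ⊆ B → f A ≤ f B

/-- `f` is submodular. -/
def IsSubmodularFn [DecidableEq α] (f : Finset α → ℝ) : Prop :=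
  ∀ A B : Finset α, A ⊆ B → ∀ s ∉ B, f (insert s A) - f A ≥ f (insert s B) - f B

/-- Marginal contribution Δ(A|B) = f(A ∪ B) − f(B). -/
def marg [DecidableEq α] (f : Finset α → ℝ) (A B : Finset α) : ℝ := f (A ∪ B) - f B

/-- Δ^l(A|B): best marginal of a subset of `A` of size at most `l`. -/
noncomputable def margSup [DecidableEq α] (f : Finset α → ℝ) (l : ℕ) (A B : Finset α) : ℝ :=
  (A.powerset.filter (fun C => C.card ≤ l)).sup' ⟨∅, by simp⟩ (fun C => marg f C B)

/-- Union of the first `i` sets: x_0 ∪ ⋯ ∪ x_{i-1}. -/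
def pref [DecidableEq α] (x : ℕ → Finset α) (i : ℕ) : Finset α := (Finset.range i).biUnion x

/-- A nominal greedy profile. -/
def NomGreedy [DecidableEq α] (f : Finset α → ℝ) (Ss : ℕ → Finset α) (k n : ℕ)
    (x : ℕ → Finset α) : Prop :=
  ∀ i < n, x i ⊆ Ss i ∧ (x i).card ≤ k ∧
    ∀ c : Finset α, c ⊆ Ss i → c.card ≤ k → f (c ∪ pref x i) ≤ f (x i ∪ pref x i)

/-- An augmented greedy profile. -/
def AugGreedy [DecidableEq α] (f : Finset α → ℝ) (Ss : ℕ → Finset α) (k m n : ℕ)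
    (x z : ℕ → Finset α) : Prop :=
  ∀ i < n,
    (x i ⊆ Ss i ∪ pref z i ∧ (x i).card ≤ k ∧
      ∀ c : Finset α, c ⊆ Ss i ∪ pref z i → c.card ≤ k →
        f (c ∪ pref x i) ≤ f (x i ∪ pref x i)) ∧
    ∃ zk zr : Finset α,
      z i = zk ∪ zr ∧ zk ⊆ Ss i ∧ zk.card ≤ min k m ∧
      (∀ w : Finset α, w ⊆ Ss i → w.card ≤ min k m →
        marg f w (pref x (i + 1)) ≤ marg f zk (pref x (i + 1))) ∧
      zr ⊆ Ss i ∧ zr.card ≤ m - k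

/-- The optimal value OPT(f, (S_i), k) over feasible profiles with n agents. -/
noncomputable def OPTval [DecidableEq α] [Fintype α] (f : Finset α → ℝ) (Ss : ℕ → Finset α)
    (n k : ℕ) : ℝ :=
  ((Finset.univ : Finset (Fin n → Finset α)).filter
      (fun y => ∀ i : Fin n, y i ⊆ Ss (i : ℕ) ∧ (y i).card ≤ k)).sup'
    ⟨(fun _ => ∅), by simp⟩ (fun y => f (Finset.univ.biUnion (fun i => y i)))

section Aux

variable [DecidableEq α] {f : Finset α → ℝ}

lemma marg_nonneg (hmono : IsMonotoneFn f) (A B : Finset α) : 0 ≤ marg f A B := by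
  have := hmono B (A ∪ B) (Finset.subset_union_right)
  simp [marg]; linarith

lemma dimret (hmono : IsMonotoneFn f) (hsub : IsSubmodularFn f) (A : Finset α) :
    ∀ D C : Finset α, D ⊆ C → marg f A C ≤ marg f A D := by
  induction A using Finset.induction with
  | empty => intro D C _; simp [marg]
  | @insert s A' hs ih =>
    intro D C hDC
    have hC : marg f (insert s A') C = (f (insert s (A' ∪ C)) - f (A' ∪ C)) + marg f A' C := by
      simp [marg, Finset.insert_union]
    have hD : marg f (insert s A') D = (f (insert s (A' ∪ D)) - f (A' ∪ D)) + marg f A' D := by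
      simp [marg, Finset.insert_union]
    have hsub' : A' ∪ D ⊆ A' ∪ C := Finset.union_subset_union_right hDC
    have hinc : f (insert s (A' ∪ C)) - f (A' ∪ C) ≤ f (insert s (A' ∪ D)) - f (A' ∪ D) := by
      by_cases hsC : s ∈ A' ∪ C
      · have h1 : insert s (A' ∪ C) = A' ∪ C := Finset.insert_eq_self.mpr hsC
        have h2 : f (A' ∪ D) ≤ f (insert s (A' ∪ D)) :=
          hmono _ _ (Finset.subset_insert _ _)
        rw [h1]; linarith
      · exact hsub (A' ∪ D) (A' ∪ C) hsub' s hsC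
    have := ih D C hDC
    linarith

lemma marg_subadd (hmono : IsMonotoneFn f) (hsub : IsSubmodularFn f) (Z T : Finset α) :
    marg f Z T ≤ ∑ z ∈ Z, marg f {z} T := by
  induction Z using Finset.induction with
  | empty => simp [marg]
  | @insert z Z' hz ih =>
    rw [Finset.sum_insert hz]
    have hsplit : marg f (insert z Z') T = marg f {z} (Z' ∪ T) + marg f Z' T := by
      simp [marg, Finset.insert_union, Finset.union_assoc, ← Finset.insert_eq]
    have h1 : marg f {z} (Z' ∪ T) ≤ marg f {z} T :=
      dimret hmono hsub {z} T (Z' ∪ T) Finset.subset_union_right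
    linarith

lemma marg_telescope (hmono : IsMonotoneFn f) (hsub : IsSubmodularFn f) (X B : Finset α) :
    ∑ x ∈ X, marg f {x} (B ∪ X.erase x) ≤ marg f X B := by
  induction X using Finset.induction with
  | empty => simp [marg_nonneg hmono]
  | @insert a X' ha ih =>
    rw [Finset.sum_insert ha]
    have hea : (insert a X').erase a = X' := Finset.erase_insert ha
    have hsplit : marg f (insert a X') B = marg f {a} (B ∪ X') + marg f X' B := by
      simp [marg, Finset.insert_union, Finset.union_comm, ← Finset.insert_eq]
    have hterm : ∀ x ∈ X', marg f {x} (B ∪ (insert a X').erase x) ≤ marg f {x} (B ∪ X'.erase x) := by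
      intro x hx
      apply dimret hmono hsub
      apply Finset.union_subset_union_right
      exact Finset.erase_subset_erase _ (Finset.subset_insert _ _)
    have hsum : ∑ x ∈ X', marg f {x} (B ∪ (insert a X').erase x)
        ≤ ∑ x ∈ X', marg f {x} (B ∪ X'.erase x) := Finset.sum_le_sum hterm
    rw [hea, hsplit]
    linarith

end Aux

/-- Case m ≤ k in the proof of Theorem 2: the leftover marginal of any message of size at
most `m` beyond a greedily chosen `X` is at most an m/k fraction of Δ(X|B). -/
theorem stmt11 [DecidableEq α] [Fintype α] (f : Finset α → ℝ)
    (hnorm : f ∅ = 0) (hmono : IsMonotoneFn f) (hsub : IsSubmodularFn f)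
    (k m : ℕ) (hm : 1 ≤ m) (hmk : m ≤ k) (B S' X : Finset α)
    (hX : X ⊆ S') (hXcard : X.card ≤ k)
    (hXmax : ∀ W ⊆ S', W.card ≤ k → marg f W B ≤ marg f X B)
    (Z : Finset α) (hZ : Z ⊆ S') (hZcard : Z.card ≤ m) :
    marg f Z (B ∪ X) ≤ ((m : ℝ) / k) * marg f X B := by
  have hk1 : 1 ≤ k := le_trans hm hmk
  have hk0 : (0 : ℝ) < k := by exact_mod_cast hk1
  have hMnn : 0 ≤ marg f X B := marg_nonneg hmono X B
  have hsubZ : marg f Z (B ∪ X) ≤ ∑ z ∈ Z, marg f {z} (B ∪ X) :=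
    marg_subadd hmono hsub Z (B ∪ X)
  rcases lt_or_eq_of_le hXcard with hlt | heq
  · -- |X| < k : each singleton marginal is ≤ 0
    have hz : ∀ z ∈ Z, marg f {z} (B ∪ X) ≤ 0 := by
      intro z hzZ
      have hW : insert z X ⊆ S' := Finset.insert_subset (hZ hzZ) hX
      have hWc : (insert z X).card ≤ k :=
        le_trans (Finset.card_insert_le _ _) hlt
      have := hXmax (insert z X) hW hWc
      have he : ({z} : Finset α) ∪ (B ∪ X) = insert z X ∪ B := by
        ext a; simp; tauto
      have he2 : B ∪ X = X ∪ B := Finset.union_comm _ _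
      simp only [marg] at this ⊢
      rw [he, he2]
      linarith
    have : ∑ z ∈ Z, marg f {z} (B ∪ X) ≤ 0 :=
      Finset.sum_nonpos hz
    have hrhs : 0 ≤ ((m : ℝ) / k) * marg f X B := by positivity
    linarith
  · -- |X| = k
    have hXne : X.Nonempty := by
      rw [← Finset.card_pos, heq]; omega
    obtain ⟨x₀, hx₀X, hx₀min⟩ :=
      Finset.exists_min_image X (fun x => marg f {x} (B ∪ X.erase x)) hXne
    set g : α → ℝ := fun x => marg f {x} (B ∪ X.erase x) with hg
    have hgnn : 0 ≤ g x₀ := marg_nonneg hmono _ _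
    -- k * g x₀ ≤ Δ(X|B)
    have hsumg : (k : ℝ) * g x₀ ≤ marg f X B := by
      have h1 : ∑ _x ∈ X, g x₀ ≤ ∑ x ∈ X, g x := Finset.sum_le_sum fun x hx => hx₀min x hx
      have h2 : ∑ _x ∈ X, g x₀ = (k : ℝ) * g x₀ := by
        rw [Finset.sum_const, heq]; simp [nsmul_eq_mul]
      have h3 := marg_telescope hmono hsub X B
      rw [h2] at h1; exact le_trans h1 h3
    -- each z in Z: marg f {z} (B ∪ X) ≤ g x₀
    have hz : ∀ z ∈ Z, marg f {z} (B ∪ X) ≤ g x₀ := by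
      intro z hzZ
      by_cases hzX : z ∈ X
      · have he : ({z} : Finset α) ∪ (B ∪ X) = B ∪ X := by
          rw [Finset.singleton_union, Finset.insert_eq_self, Finset.mem_union]
          exact Or.inr hzX
        simp [marg, he]; exact hgnn
      · have h1 : marg f {z} (B ∪ X) ≤ marg f {z} (B ∪ X.erase x₀) :=
          dimret hmono hsub {z} _ _
            (Finset.union_subset_union_right (Finset.erase_subset _ _))
        have hW : insert z (X.erase x₀) ⊆ S' :=
          Finset.insert_subset (hZ hzZ) (le_trans (Finset.erase_subset _ _) hX)
        have hWc : (insert z (X.erase x₀)).card ≤ k := by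
          have := Finset.card_insert_le z (X.erase x₀)
          have hce : (X.erase x₀).card = X.card - 1 := Finset.card_erase_of_mem hx₀X
          omega
        have hmax := hXmax _ hW hWc
        have he1 : ({z} : Finset α) ∪ (B ∪ X.erase x₀) = insert z (X.erase x₀) ∪ B := by
          ext a; simp; tauto
        have he2 : ({x₀} : Finset α) ∪ (B ∪ X.erase x₀) = X ∪ B := by
          ext a; simp
          constructor
          · rintro (rfl | h | h)
            · exact Or.inl hx₀X
            · exact Or.inr h
            · exact Or.inl h.2
          · rintro (h | h)
            · by_cases hax : a = x₀
              · exact Or.inl hax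
              · exact Or.inr (Or.inr ⟨hax, h⟩)
            · exact Or.inr (Or.inl h)
        have hgexp : g x₀ = f (X ∪ B) - f (B ∪ X.erase x₀) := by
          simp only [hg, marg, he2]
        simp only [marg] at h1 hmax ⊢
        rw [he1] at h1
        rw [hgexp]
        linarith
    have hsum2 : ∑ z ∈ Z, marg f {z} (B ∪ X) ≤ (Z.card : ℝ) * g x₀ := by
      calc ∑ z ∈ Z, marg f {z} (B ∪ X) ≤ ∑ _z ∈ Z, g x₀ := Finset.sum_le_sum hz
        _ = (Z.card : ℝ) * g x₀ := by rw [Finset.sum_const]; simp [nsmul_eq_mul]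
    have hZm : (Z.card : ℝ) * g x₀ ≤ (m : ℝ) * g x₀ := by
      apply mul_le_mul_of_nonneg_right _ hgnn
      exact_mod_cast hZcard
    have hfin : (m : ℝ) * g x₀ ≤ ((m : ℝ) / k) * marg f X B := by
      rw [div_mul_eq_mul_div, le_div_iff₀ hk0]
      have hm0 : (0 : ℝ) ≤ m := by positivity
      calc (m : ℝ) * g x₀ * k = (m : ℝ) * ((k : ℝ) * g x₀) := by ring
        _ ≤ (m : ℝ) * marg f X B := by
            apply mul_le_mul_of_nonneg_left hsumg hm0
    linarith
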